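/- Let L be a bounded distributive lattice and let f : L^n → L be an associative lattice polynomial function with n ≥ 3. Then for every subset I ⊊ [n] with 1 < |I| < n, the value α_f(I) = f(e_I) satisfies α_f(I) = ⋁_{J ⊊ I} α_f(J); that is, the coefficient α*_f(I) in the minimal disjunctive normal form of f vanishes for all I of cardinality strictly between 1 and n. -/

import Mathlib

variable {X : Type*}

/-- The string consisting of the single letter `g y` if `y` is nonempty, and the
empty string if `y` is empty (the convention `g ε = ε`). -/
def strOf (g : List X → X) (y : List X) : List X :=
  match y with
  | [] => []
  | _ => [g y]

/-- Associativity for functions on strings. -/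
def AssocStar (g : List X → X) : Prop :=
  ∀ x y z x' y' z' : List X, x ++ y ++ z = x' ++ y' ++ z' →
    g (x ++ strOf g y ++ z) = g (x' ++ strOf g y' ++ z')

/-- Range-idempotency for functions on strings. -/
def RangeIdem (g : List X → X) : Prop :=
  ∀ x : List X, x ≠ [] → ∀ n : ℕ, 1 ≤ n → g (List.replicate n (g x)) = g x

/-- Application of an `n`-ary function to a list of length `n`. -/
def liftF {n : ℕ} (f : (Fin n → X) → X) (l : List X) (h : l.length = n) : X :=
  f fun i => l.get (Fin.cast h.symm i)

/-- Associativity for `n`-ary functions. -/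
def AssocFin {n : ℕ} (f : (Fin n → X) → X) : Prop :=
  ∀ (x z x' z' y y' : List X) (hy : y.length = n) (hy' : y'.length = n),
    x.length + z.length = n - 1 → x'.length + z'.length = n - 1 →
    x ++ y ++ z = x' ++ y' ++ z' →
    ∀ (h : (x ++ [liftF f y hy] ++ z).length = n)
      (h' : (x' ++ [liftF f y' hy'] ++ z').length = n),
      liftF f (x ++ [liftF f y hy] ++ z) h = liftF f (x' ++ [liftF f y' hy'] ++ z') h'

variable {L : Type*} [DistribLattice L] [BoundedOrder L]

/-- Lattice polynomial functions: representable in disjunctive normal form. -/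
def IsPolynomialFn {n : ℕ} (f : (Fin n → L) → L) : Prop :=
  ∃ α : Finset (Fin n) → L,
    ∀ x : Fin n → L, f x = Finset.univ.sup fun I : Finset (Fin n) => α I ⊓ I.inf x

/-- The ternary median. -/
def med (a b c : L) : L := (a ⊔ b) ⊓ (a ⊔ c) ⊓ (b ⊔ c)

/-- The characteristic vector of `I ⊆ [n]`. -/
def charVec {n : ℕ} (I : Finset (Fin n)) : Fin n → L := fun i => if i ∈ I then ⊤ else ⊥

/-- A function on strings all of whose `n`-ary components (`n ≥ 1`) are polynomial. -/
def IsPolyStar (g : List L → L) : Prop :=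
  ∀ n : ℕ, 1 ≤ n → IsPolynomialFn fun x : Fin n → L => g (List.ofFn x)


section Aux

lemma poly_mono {n : ℕ} {f : (Fin n → L) → L} (hf : IsPolynomialFn f) : Monotone f := by
  obtain ⟨α, hα⟩ := hf
  intro x y hxy
  rw [hα x, hα y]
  refine Finset.sup_mono_fun fun S _ => inf_le_inf_left _ (Finset.inf_mono_fun fun i _ => hxy i)

lemma poly_decomp {n : ℕ} {f : (Fin n → L) → L} (hf : IsPolynomialFn f)
    (x : Fin n → L) (k : Fin n) (t : L) :
    f (Function.update x k t) ≤ f (Function.update x k ⊥) ⊔ (t ⊓ f (Function.update x k ⊤)) := by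
  obtain ⟨α, hα⟩ := hf
  rw [hα]
  refine Finset.sup_le fun S _ => ?_
  by_cases hk : k ∈ S
  · refine le_sup_of_le_right ?_
    have h1 : S.inf (Function.update x k t) ≤ t := by
      have := Finset.inf_le (f := Function.update x k t) hk
      simpa using this
    have h2 : α S ⊓ S.inf (Function.update x k t) ≤ f (Function.update x k ⊤) := by
      rw [hα]
      refine le_trans (inf_le_inf_left _ (Finset.inf_mono_fun fun i _ => ?_))
        (Finset.le_sup (f := fun S => α S ⊓ S.inf (Function.update x k ⊤)) (Finset.mem_univ S))
      by_cases hik : i = k <;> simp [hik, Function.update]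
    exact le_inf (le_trans inf_le_right h1) h2
  · refine le_sup_of_le_left ?_
    have : S.inf (Function.update x k t) = S.inf (Function.update x k ⊥) :=
      Finset.inf_congr rfl fun i hi => by
        have : i ≠ k := fun h => hk (h ▸ hi)
        simp [Function.update, this]
    rw [hα, this]
    exact Finset.le_sup (f := fun S => α S ⊓ S.inf (Function.update x k ⊥)) (Finset.mem_univ S)

/-- The list `[w s, w (s+1), ..., w (s+m-1)]`. -/
def pieceL (w : ℕ → X) (s m : ℕ) : List X := (List.range m).map fun i => w (s + i)

lemma pieceL_length (w : ℕ → X) (s m : ℕ) : (pieceL w s m).length = m := by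
  simp [pieceL]

lemma pieceL_append (w : ℕ → X) (s a b : ℕ) :
    pieceL w s a ++ pieceL w (s + a) b = pieceL w s (a + b) := by
  simp only [pieceL, List.range_add, List.map_append, List.map_map]
  congr 1
  apply List.map_congr_left
  intro i _
  simp [Function.comp]
  ring_nf

lemma piece_split (w : ℕ → X) (k n : ℕ) (hk : k + 1 ≤ n) :
    pieceL w 0 k ++ pieceL w k n ++ pieceL w (k + n) (n - 1 - k) = pieceL w 0 (2 * n - 1) := by
  have h1 := pieceL_append w 0 k n
  have h2 := pieceL_append w 0 (k + n) (n - 1 - k)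
  rw [zero_add] at h1 h2
  rw [h1, h2]
  congr 1
  omega

lemma liftF_piece {n : ℕ} (f : (Fin n → X) → X) (w : ℕ → X) (s : ℕ)
    (h : (pieceL w s n).length = n) :
    liftF f (pieceL w s n) h = f fun i => w (s + i) := by
  unfold liftF
  congr 1
  funext i
  simp [pieceL, List.get_eq_getElem]
  rfl

lemma liftF_outer {n : ℕ} (f : (Fin n → X) → X) (w : ℕ → X) (t : X) (k : ℕ)
    (hk : k + 1 ≤ n)
    (h : (pieceL w 0 k ++ [t] ++ pieceL w (k + n) (n - 1 - k)).length = n) :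
    liftF f (pieceL w 0 k ++ [t] ++ pieceL w (k + n) (n - 1 - k)) h =
      f fun i : Fin n =>
        if (i : ℕ) < k then w i else if (i : ℕ) = k then t else w ((i : ℕ) + n - 1) := by
  unfold liftF
  congr 1
  funext i
  rw [List.get_eq_getElem]
  simp only [Fin.coe_cast]
  rcases lt_trichotomy (i : ℕ) k with h1 | h1 | h1
  · rw [List.getElem_append_left (by simp [pieceL_length]; omega),
      List.getElem_append_left (by simp [pieceL_length]; omega)]
    simp [pieceL, h1]
  · rw [List.getElem_append_left (by simp [pieceL_length]; omega),
      List.getElem_append_right (by simp [pieceL_length]; omega)]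
    simp [pieceL_length, h1]
  · rw [List.getElem_append_right (by simp [pieceL_length]; omega)]
    simp only [pieceL, List.length_append, List.length_map, List.length_range, List.length_cons,
      List.length_nil, List.getElem_map, List.getElem_range]
    have : ¬ ((i:ℕ) < k) := by omega
    simp [this, h1.ne', List.getElem_map, List.getElem_range]
    congr 1
    omega

end Aux

/-- if `f : Lⁿ → L` is an associative lattice polynomial function, `n ≥ 3`,
then for every `I ⊊ [n]` with `1 < |I| < n` one has `α_f(I) = ⋁_{J ⊊ I} α_f(J)`,
i.e. the minimal-DNF coefficient `α*_f(I)` vanishes. -/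
theorem stmt8 {n : ℕ} (hn : 3 ≤ n) (f : (Fin n → L) → L)
    (hf : IsPolynomialFn f) (hassoc : AssocFin f)
    (I : Finset (Fin n)) (hI1 : 1 < I.card) (hI2 : I.card < n) :
    f (charVec I) = I.ssubsets.sup fun J => f (charVec J) := by
  classical
  -- pick p ∉ I
  have hIne : I ≠ Finset.univ := by
    intro h
    rw [h, Finset.card_univ, Fintype.card_fin] at hI2
    omega
  obtain ⟨p, -, hp⟩ := Finset.exists_of_ssubset (Finset.ssubset_univ_iff.mpr hIne)
  have hpn : (p : ℕ) < n := p.isLt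
  -- the word of length 2n-1
  set w : ℕ → L := fun j =>
    if ((j < (p:ℕ) ∧ ∃ i ∈ I, (i:ℕ) = j) ∨
        ((n-1) + (p:ℕ) < j ∧ ∃ i ∈ I, (i:ℕ) + (n-1) = j)) then ⊤ else ⊥ with hw
  set A : Finset (Fin n) := I.filter fun j => (j:ℕ) < (p:ℕ) with hA
  set B : Finset (Fin n) := I.filter fun j => (p:ℕ) < (j:ℕ) with hB
  -- values of w
  have hwlow : ∀ i : Fin n, w (i:ℕ) = charVec A i := by
    intro i
    simp only [hw, hA, charVec, Finset.mem_filter]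
    refine if_congr ⟨?_, ?_⟩ rfl rfl
    · rintro (⟨h1, i', hi', he⟩ | ⟨h2, -⟩)
      · exact ⟨(Fin.ext he) ▸ hi', h1⟩
      · exfalso; have := i.isLt; omega
    · rintro ⟨hiI, hip⟩
      exact Or.inl ⟨hip, i, hiI, rfl⟩
  have hwhigh : ∀ i : Fin n, 1 ≤ (i:ℕ) → w ((i:ℕ) + n - 1) = charVec B i := by
    intro i hi
    simp only [hw, hB, charVec, Finset.mem_filter]
    refine if_congr ⟨?_, ?_⟩ rfl rfl
    · rintro (⟨h1, -⟩ | ⟨h2, i', hi', he⟩)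
      · exfalso; omega
      · have hii : (i':ℕ) = (i:ℕ) := by omega
        exact ⟨(Fin.ext hii) ▸ hi', by omega⟩
    · rintro ⟨hiI, hip⟩
      exact Or.inr ⟨by omega, i, hiI, by omega⟩
  -- the parenthesization values
  set V : ℕ → Fin n → L := fun k i =>
    if (i:ℕ) < k then w i else if (i:ℕ) = k then f (fun j : Fin n => w (k + (j:ℕ)))
    else w ((i:ℕ) + n - 1) with hV
  have hstep : ∀ k k' : ℕ, k + 1 ≤ n → k' + 1 ≤ n → f (V k) = f (V k') := by
    intro k k' hk hk'
    have hy := pieceL_length w k n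
    have hy' := pieceL_length w k' n
    have hout : (pieceL w 0 k ++ [liftF f (pieceL w k n) hy] ++
        pieceL w (k+n) (n-1-k)).length = n := by
      simp [pieceL_length]; omega
    have hout' : (pieceL w 0 k' ++ [liftF f (pieceL w k' n) hy'] ++
        pieceL w (k'+n) (n-1-k')).length = n := by
      simp [pieceL_length]; omega
    have H := hassoc (pieceL w 0 k) (pieceL w (k+n) (n-1-k))
      (pieceL w 0 k') (pieceL w (k'+n) (n-1-k'))
      (pieceL w k n) (pieceL w k' n) hy hy'
      (by simp [pieceL_length]; omega) (by simp [pieceL_length]; omega)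
      (by rw [piece_split w k n hk, piece_split w k' n hk']) hout hout'
    rw [liftF_outer f w _ k hk hout, liftF_outer f w _ k' hk' hout',
      liftF_piece, liftF_piece] at H
    simp only [hV]
    exact H
  -- easy direction
  have hend : (I.ssubsets.sup fun J => f (charVec J)) ≤ f (charVec I) := by
    refine Finset.sup_le fun J hJ => poly_mono hf fun i => ?_
    have hJI := Finset.mem_ssubsets.mp hJ
    by_cases hi : i ∈ J
    · simp [charVec, hi, hJI.subset hi]
    · simp [charVec, hi]
  refine le_antisymm ?_ hend
  -- lower bound through V
  have hlow : ∀ k : ℕ, k + 1 ≤ n → f (charVec I) ≤ f (V k) := by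
    intro k hk
    rw [← hstep (p:ℕ) k hpn hk]
    refine poly_mono hf fun i => ?_
    simp only [hV]
    rcases lt_trichotomy (i:ℕ) (p:ℕ) with h1 | h1 | h1
    · rw [if_pos h1, hwlow]
      by_cases hi : i ∈ I
      · have hiA : i ∈ A := by rw [hA]; exact Finset.mem_filter.mpr ⟨hi, h1⟩
        simp [charVec, hi, hiA]
      · simp [charVec, hi]
    · have hip : i = p := Fin.ext h1
      rw [if_neg (by omega), if_pos h1]
      simp [charVec, hip, hp]
    · rw [if_neg (by omega), if_neg (by omega), hwhigh i (by omega)]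
      by_cases hi : i ∈ I
      · have hiB : i ∈ B := by rw [hB]; exact Finset.mem_filter.mpr ⟨hi, h1⟩
        simp [charVec, hi, hiB]
      · simp [charVec, hi]
  -- generic finishing step
  have hfinal : ∀ (k : Fin n) (J : Finset (Fin n)), k ∉ J → J ⊂ I →
      V (k:ℕ) = Function.update (charVec J) k (f fun j : Fin n => w ((k:ℕ) + (j:ℕ))) →
      ((f fun j : Fin n => w ((k:ℕ) + (j:ℕ))) ⊓ f (charVec (insert k J)) ≤
        I.ssubsets.sup fun J => f (charVec J)) →
      f (charVec I) ≤ I.ssubsets.sup fun J => f (charVec J) := by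
    intro k J hkJ hJI hVeq hbound
    have h1 := hlow (k:ℕ) k.isLt
    rw [hVeq] at h1
    have h2 : f (Function.update (charVec J) k (f fun j : Fin n => w ((k:ℕ) + (j:ℕ)))) ≤
        f (Function.update (charVec J) k (⊥:L)) ⊔
          ((f fun j : Fin n => w ((k:ℕ) + (j:ℕ))) ⊓ f (Function.update (charVec J) k (⊤:L))) :=
      poly_decomp hf _ _ _
    have e1 : Function.update (charVec J) k (⊥:L) = charVec J := by
      funext i
      rcases eq_or_ne i k with rfl | hik
      · simp [Function.update, charVec, hkJ]
      · simp [Function.update, hik]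
    have e2 : Function.update (charVec J) k (⊤:L) = charVec (insert k J) := by
      funext i
      rcases eq_or_ne i k with rfl | hik
      · simp [Function.update, charVec]
      · simp [Function.update, hik, charVec, Finset.mem_insert]
    rw [e1, e2] at h2
    refine le_trans h1 (le_trans h2 (sup_le ?_ hbound))
    exact Finset.le_sup (f := fun J => f (charVec J)) (Finset.mem_ssubsets.mpr hJI)
  by_cases hBne : B.Nonempty
  · by_cases hAne : A.Nonempty
    · -- Case 1 : slot k = 0, J = B, window = A
      obtain ⟨a, haA⟩ := hAne
      obtain ⟨b, hbB⟩ := hBne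
      rw [hA] at haA
      rw [hB] at hbB
      have haI : a ∈ I := (Finset.mem_filter.mp haA).1
      have hap : (a:ℕ) < (p:ℕ) := (Finset.mem_filter.mp haA).2
      have hbI : b ∈ I := (Finset.mem_filter.mp hbB).1
      have hpb : (p:ℕ) < (b:ℕ) := (Finset.mem_filter.mp hbB).2
      set k0 : Fin n := ⟨0, by omega⟩ with hk0
      have hk0v : (k0:ℕ) = 0 := rfl
      have hk0B : k0 ∉ B := by
        rw [hB]
        intro h
        have := (Finset.mem_filter.mp h).2
        omega
      have hBI : B ⊂ I := by
        rw [hB]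
        refine (Finset.ssubset_iff_of_subset (Finset.filter_subset _ _)).mpr
          ⟨a, haI, fun h => ?_⟩
        have := (Finset.mem_filter.mp h).2
        omega
      have hAI : A ⊂ I := by
        rw [hA]
        refine (Finset.ssubset_iff_of_subset (Finset.filter_subset _ _)).mpr
          ⟨b, hbI, fun h => ?_⟩
        have := (Finset.mem_filter.mp h).2
        omega
      have ht : (f fun j : Fin n => w ((k0:ℕ) + (j:ℕ))) = f (charVec A) := by
        congr 1
        funext j
        have he : (k0:ℕ) + (j:ℕ) = (j:ℕ) := by omega
        rw [he, hwlow]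
      refine hfinal k0 B hk0B hBI ?_ ?_
      · funext i
        simp only [hV]
        rcases Nat.eq_zero_or_pos (i:ℕ) with h0 | h0
        · have hik : i = k0 := Fin.ext (by omega)
          rw [if_neg (by omega), if_pos (by omega), hik, Function.update_self]
        · have hik : i ≠ k0 := by
            intro h
            rw [h] at h0
            omega
          rw [if_neg (by omega), if_neg (by omega), hwhigh i h0,
            Function.update_of_ne hik]
      · rw [ht]
        exact le_trans inf_le_left
          (Finset.le_sup (f := fun J => f (charVec J)) (Finset.mem_ssubsets.mpr hAI))
    · -- Case 2 : A = ∅, slot k = second smallest element of I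
      have hAemp : A = ∅ := Finset.not_nonempty_iff_eq_empty.mp hAne
      have hIgt : ∀ i, i ∈ I → (p:ℕ) < (i:ℕ) := by
        intro i hi
        rcases lt_trichotomy (i:ℕ) (p:ℕ) with h | h | h
        · exfalso
          have hiA : i ∈ A := by rw [hA]; exact Finset.mem_filter.mpr ⟨hi, h⟩
          rw [hAemp] at hiA
          simp at hiA
        · exact absurd ((Fin.ext h) ▸ hi) hp
        · exact h
      have hInon : I.Nonempty := Finset.card_pos.mp (by omega)
      set a : Fin n := I.min' hInon with ha
      have haI : a ∈ I := I.min'_mem hInon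
      have herase : (I.erase a).Nonempty := by
        rw [← Finset.card_pos, Finset.card_erase_of_mem haI]
        omega
      set a' : Fin n := (I.erase a).min' herase with ha'
      have ha'e : a' ∈ I.erase a := Finset.min'_mem _ _
      have ha'I : a' ∈ I := Finset.mem_of_mem_erase ha'e
      have ha'a : a' ≠ a := Finset.ne_of_mem_erase ha'e
      have haa' : (a:ℕ) < (a':ℕ) := by
        have h1 : (a:ℕ) ≤ (a':ℕ) := Fin.le_def.mp (I.min'_le a' ha'I)
        have h2 : (a:ℕ) ≠ (a':ℕ) := fun h => ha'a (Fin.ext h.symm)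
        omega
      have hmin' : ∀ i, i ∈ I → i ≠ a → (a':ℕ) ≤ (i:ℕ) := fun i hi hia =>
        Fin.le_def.mp (Finset.min'_le _ _ (Finset.mem_erase.mpr ⟨hia, hi⟩))
      set J : Finset (Fin n) := I.filter fun j => (a':ℕ) < (j:ℕ) with hJ
      have ha'J : a' ∉ J := by
        rw [hJ]
        intro h
        have := (Finset.mem_filter.mp h).2
        omega
      have hJI : J ⊂ I := by
        rw [hJ]
        refine (Finset.ssubset_iff_of_subset (Finset.filter_subset _ _)).mpr
          ⟨a, haI, fun h => ?_⟩
        have := (Finset.mem_filter.mp h).2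
        omega
      have hins : insert a' J = I.erase a := by
        ext i
        rw [hJ]
        simp only [Finset.mem_insert, Finset.mem_filter, Finset.mem_erase]
        constructor
        · rintro (rfl | ⟨hi, hlt⟩)
          · exact ⟨ha'a, ha'I⟩
          · refine ⟨fun he => ?_, hi⟩
            subst he
            omega
        · rintro ⟨hia, hi⟩
          rcases eq_or_ne i a' with rfl | hia'
          · exact Or.inl rfl
          · refine Or.inr ⟨hi, ?_⟩
            have h1 := hmin' i hi hia
            have h2 : (a':ℕ) ≠ (i:ℕ) := fun h => hia' (Fin.ext h.symm)
            omega
      refine hfinal a' J ha'J hJI ?_ ?_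
      · funext i
        simp only [hV]
        rcases lt_trichotomy (i:ℕ) (a':ℕ) with h1 | h1 | h1
        · have hik : i ≠ a' := fun he => by rw [he] at h1; omega
          rw [if_pos h1, hwlow, hAemp, Function.update_of_ne hik]
          have hiJ : i ∉ J := by
            rw [hJ]
            intro h
            have := (Finset.mem_filter.mp h).2
            omega
          simp [charVec, hiJ]
        · have hik : i = a' := Fin.ext h1
          rw [if_neg (by omega), if_pos h1, hik, Function.update_self]
        · have hik : i ≠ a' := fun he => by rw [he] at h1; omega
          rw [if_neg (by omega), if_neg (by omega), hwhigh i (by omega),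
            Function.update_of_ne hik]
          by_cases hi : i ∈ I
          · have hiB : i ∈ B := by rw [hB]; exact Finset.mem_filter.mpr ⟨hi, hIgt i hi⟩
            have hiJ : i ∈ J := by rw [hJ]; exact Finset.mem_filter.mpr ⟨hi, h1⟩
            simp [charVec, hiB, hiJ]
          · have hiB : i ∉ B := fun h => hi (by rw [hB] at h; exact (Finset.mem_filter.mp h).1)
            have hiJ : i ∉ J := fun h => hi (by rw [hJ] at h; exact (Finset.mem_filter.mp h).1)
            simp [charVec, hiB, hiJ]
      · rw [hins]
        exact le_trans inf_le_right
          (Finset.le_sup (f := fun J => f (charVec J))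
            (Finset.mem_ssubsets.mpr (Finset.erase_ssubset haI)))
  · -- Case 3 : B = ∅, slot k = second largest element of I
    have hBemp : B = ∅ := Finset.not_nonempty_iff_eq_empty.mp hBne
    have hIlt : ∀ i, i ∈ I → (i:ℕ) < (p:ℕ) := by
      intro i hi
      rcases lt_trichotomy (i:ℕ) (p:ℕ) with h | h | h
      · exact h
      · exact absurd ((Fin.ext h) ▸ hi) hp
      · exfalso
        have hiB : i ∈ B := by rw [hB]; exact Finset.mem_filter.mpr ⟨hi, h⟩
        rw [hBemp] at hiB
        simp at hiB
    have hInon : I.Nonempty := Finset.card_pos.mp (by omega)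
    set b : Fin n := I.max' hInon with hb
    have hbI : b ∈ I := I.max'_mem hInon
    have herase : (I.erase b).Nonempty := by
      rw [← Finset.card_pos, Finset.card_erase_of_mem hbI]
      omega
    set b' : Fin n := (I.erase b).max' herase with hb'
    have hb'e : b' ∈ I.erase b := Finset.max'_mem _ _
    have hb'I : b' ∈ I := Finset.mem_of_mem_erase hb'e
    have hb'b : b' ≠ b := Finset.ne_of_mem_erase hb'e
    have hbb' : (b':ℕ) < (b:ℕ) := by
      have h1 : (b':ℕ) ≤ (b:ℕ) := Fin.le_def.mp (I.le_max' b' hb'I)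
      have h2 : (b':ℕ) ≠ (b:ℕ) := fun h => hb'b (Fin.ext h)
      omega
    have hmax' : ∀ i, i ∈ I → i ≠ b → (i:ℕ) ≤ (b':ℕ) := fun i hi hib =>
      Fin.le_def.mp (Finset.le_max' _ _ (Finset.mem_erase.mpr ⟨hib, hi⟩))
    set J : Finset (Fin n) := I.filter fun j => (j:ℕ) < (b':ℕ) with hJ
    have hb'J : b' ∉ J := by
      rw [hJ]
      intro h
      have := (Finset.mem_filter.mp h).2
      omega
    have hJI : J ⊂ I := by
      rw [hJ]
      refine (Finset.ssubset_iff_of_subset (Finset.filter_subset _ _)).mpr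
        ⟨b, hbI, fun h => ?_⟩
      have := (Finset.mem_filter.mp h).2
      omega
    have hins : insert b' J = I.erase b := by
      ext i
      rw [hJ]
      simp only [Finset.mem_insert, Finset.mem_filter, Finset.mem_erase]
      constructor
      · rintro (rfl | ⟨hi, hlt⟩)
        · exact ⟨hb'b, hb'I⟩
        · refine ⟨fun he => ?_, hi⟩
          subst he
          omega
      · rintro ⟨hib, hi⟩
        rcases eq_or_ne i b' with rfl | hib'
        · exact Or.inl rfl
        · refine Or.inr ⟨hi, ?_⟩
          have h1 := hmax' i hi hib
          have h2 : (i:ℕ) ≠ (b':ℕ) := fun h => hib' (Fin.ext h)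
          omega
    refine hfinal b' J hb'J hJI ?_ ?_
    · funext i
      simp only [hV]
      rcases lt_trichotomy (i:ℕ) (b':ℕ) with h1 | h1 | h1
      · have hik : i ≠ b' := fun he => by rw [he] at h1; omega
        rw [if_pos h1, hwlow, Function.update_of_ne hik]
        by_cases hi : i ∈ I
        · have hiA : i ∈ A := by rw [hA]; exact Finset.mem_filter.mpr ⟨hi, hIlt i hi⟩
          have hiJ : i ∈ J := by rw [hJ]; exact Finset.mem_filter.mpr ⟨hi, h1⟩
          simp [charVec, hiA, hiJ]
        · have hiA : i ∉ A := fun h => hi (by rw [hA] at h; exact (Finset.mem_filter.mp h).1)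
          have hiJ : i ∉ J := fun h => hi (by rw [hJ] at h; exact (Finset.mem_filter.mp h).1)
          simp [charVec, hiA, hiJ]
      · have hik : i = b' := Fin.ext h1
        rw [if_neg (by omega), if_pos h1, hik, Function.update_self]
      · have hik : i ≠ b' := fun he => by rw [he] at h1; omega
        rw [if_neg (by omega), if_neg (by omega), hwhigh i (by omega),
          Function.update_of_ne hik, hBemp]
        have hiJ : i ∉ J := by
          rw [hJ]
          intro h
          have := (Finset.mem_filter.mp h).2
          omega
        simp [charVec, hiJ]
    · rw [hins]
      exact le_trans inf_le_right
        (Finset.le_sup (f := fun J => f (charVec J))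
          (Finset.mem_ssubsets.mpr (Finset.erase_ssubset hbI)))
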